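/- arXiv:1408.1300 — 4 statements merged into one kernel-verified Lean document; each statement's English description precedes it below -/
import Mathlib

section
/- For every a ∈ [0,1], every x in the open unit ball B ⊂ ℝ^n (n ≥ 2) and all y, z ∈ ℝ^n, the triangle inequality F_a(x, y + z) ≤ F_a(x,y) + F_a(x,z) holds. -/
open Metric

/-- The Funk-type metric `F_a` on the unit ball of `ℝ^n`. -/
noncomputable def Fa (n : ℕ) (a : ℝ) (x y : EuclideanSpace ℝ (Fin n)) : ℝ :=
  (Real.sqrt (‖y‖ ^ 2 - (‖x‖ ^ 2 * ‖y‖ ^ 2 - (inner ℝ x y : ℝ) ^ 2)) + a * (inner ℝ x y : ℝ)) /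
    (1 - ‖x‖ ^ 2)

lemma sqrt_key (c p q s t : ℝ) (hc : 0 ≤ c) (hp : 0 ≤ p) (hq : 0 ≤ q) :
    Real.sqrt (c * (p + q) ^ 2 + (s + t) ^ 2) ≤
      Real.sqrt (c * p ^ 2 + s ^ 2) + Real.sqrt (c * q ^ 2 + t ^ 2) := by
  have hA : (0:ℝ) ≤ c * p ^ 2 + s ^ 2 := by positivity
  have hB : (0:ℝ) ≤ c * q ^ 2 + t ^ 2 := by positivity
  have hA2 := Real.sq_sqrt hA
  have hB2 := Real.sq_sqrt hB
  have hAB : c * p * q + s * t ≤ Real.sqrt (c * p ^ 2 + s ^ 2) * Real.sqrt (c * q ^ 2 + t ^ 2) := by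
    rw [← Real.sqrt_mul hA]
    rcases le_or_gt (c * p * q + s * t) 0 with h | h
    · exact h.trans (Real.sqrt_nonneg _)
    · have hsq := Real.sq_sqrt (mul_nonneg hA hB)
      have hnn := Real.sqrt_nonneg ((c * p ^ 2 + s ^ 2) * (c * q ^ 2 + t ^ 2))
      nlinarith [sq_nonneg (p * t - q * s), mul_nonneg (mul_nonneg hc hp) hq]
  have h1 : c * (p + q) ^ 2 + (s + t) ^ 2 ≤
      (Real.sqrt (c * p ^ 2 + s ^ 2) + Real.sqrt (c * q ^ 2 + t ^ 2)) ^ 2 := by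
    nlinarith
  calc Real.sqrt (c * (p + q) ^ 2 + (s + t) ^ 2)
      ≤ Real.sqrt ((Real.sqrt (c * p ^ 2 + s ^ 2) + Real.sqrt (c * q ^ 2 + t ^ 2)) ^ 2) :=
        Real.sqrt_le_sqrt h1
    _ = _ := Real.sqrt_sq (by positivity)

theorem stmt_1 (n : ℕ) (hn : 2 ≤ n) (a : ℝ) (ha : a ∈ Set.Icc (0 : ℝ) 1)
    (x : EuclideanSpace ℝ (Fin n)) (hx : x ∈ ball (0 : EuclideanSpace ℝ (Fin n)) 1)
    (y z : EuclideanSpace ℝ (Fin n)) :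
    Fa n a x (y + z) ≤ Fa n a x y + Fa n a x z := by
  have hxn : ‖x‖ < 1 := by simpa using hx
  have hc : (0:ℝ) < 1 - ‖x‖ ^ 2 := by nlinarith [norm_nonneg x]
  set c := 1 - ‖x‖ ^ 2 with hcdef
  set s : ℝ := inner ℝ x y with hs
  set t : ℝ := inner ℝ x z with ht
  have hinner : (inner ℝ x (y + z) : ℝ) = s + t := inner_add_right x y z
  have hrw : ∀ w : EuclideanSpace ℝ (Fin n),
      ‖w‖ ^ 2 - (‖x‖ ^ 2 * ‖w‖ ^ 2 - (inner ℝ x w : ℝ) ^ 2) = c * ‖w‖ ^ 2 + (inner ℝ x w : ℝ) ^ 2 := by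
    intro w; ring
  have hnum : Real.sqrt (c * ‖y + z‖ ^ 2 + (s + t) ^ 2) ≤
      Real.sqrt (c * ‖y‖ ^ 2 + s ^ 2) + Real.sqrt (c * ‖z‖ ^ 2 + t ^ 2) := by
    have h1 : Real.sqrt (c * ‖y + z‖ ^ 2 + (s + t) ^ 2) ≤
        Real.sqrt (c * (‖y‖ + ‖z‖) ^ 2 + (s + t) ^ 2) := by
      apply Real.sqrt_le_sqrt
      have htr : ‖y + z‖ ≤ ‖y‖ + ‖z‖ := norm_add_le y z
      have h2 := mul_le_mul_of_nonneg_left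
        (pow_le_pow_left₀ (norm_nonneg (y + z)) htr 2) hc.le
      linarith
    exact h1.trans (sqrt_key c ‖y‖ ‖z‖ s t hc.le (norm_nonneg y) (norm_nonneg z))
  unfold Fa
  rw [hrw, hrw, hrw, hinner, ← hs, ← ht, ← add_div]
  have hc' : (0:ℝ) < 1 - ‖x‖ ^ 2 := hc
  rw [div_le_div_iff_of_pos_right hc']
  linarith
end

section
/- For every a ∈ [0,1], every x in the open unit ball B ⊂ ℝ^n (n ≥ 2) and every α ∈ ℝ^n, the supremum over nonzero y ∈ ℝ^n of ⟨α,y⟩ / F_a(x,y) equals F_a^*(x,α) = [√((1−|x|²)(1−a²|x|²)|α|² − (1−a²)(1−|x|²)⟨x,α⟩²) − a(1−|x|²)⟨x,α⟩] / (1 − a²|x|²). -/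
open Metric RealInnerProductSpace

/-- The polar transform (co-metric) of the Funk-type metric `F_a`. -/
noncomputable def FaStar (n : ℕ) (a : ℝ) (x y : EuclideanSpace ℝ (Fin n)) : ℝ :=
  (Real.sqrt ((1 - ‖x‖ ^ 2) * (1 - a ^ 2 * ‖x‖ ^ 2) * ‖y‖ ^ 2 -
      (1 - a ^ 2) * (1 - ‖x‖ ^ 2) * (inner ℝ x y : ℝ) ^ 2) -
    a * (1 - ‖x‖ ^ 2) * (inner ℝ x y : ℝ)) / (1 - a ^ 2 * ‖x‖ ^ 2)

theorem le_of_sq_le_sq' {I M : ℝ} (hM : 0 ≤ M) (h : I ^ 2 ≤ M ^ 2) : I ≤ M := by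
  nlinarith [h, hM]

theorem lt_of_sq_lt_sq' {I M : ℝ} (hM : 0 ≤ M) (h : I ^ 2 < M ^ 2) : I < M := by
  nlinarith [h, hM]

theorem gcs {E : Type*} [NormedAddCommGroup E] [InnerProductSpace ℝ E]
    (c l : ℝ) (hc : 0 ≤ c) (hl : 0 ≤ l) (x v z : E) :
    (c * ⟪v, z⟫ + l * ⟪x, v⟫ * ⟪x, z⟫) ^ 2 ≤
      (c * ‖v‖ ^ 2 + l * ⟪x, v⟫ ^ 2) * (c * ‖z‖ ^ 2 + l * ⟪x, z⟫ ^ 2) := by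
  have h1 : |⟪v, z⟫| ≤ ‖v‖ * ‖z‖ := abs_real_inner_le_norm v z
  obtain ⟨h1a, h1b⟩ := abs_le.mp h1
  have hi2 : ⟪v, z⟫ ^ 2 ≤ ‖v‖ ^ 2 * ‖z‖ ^ 2 := by nlinarith
  have hK : 0 ≤ ‖v‖ ^ 2 * ⟪x, z⟫ ^ 2 + ‖z‖ ^ 2 * ⟪x, v⟫ ^ 2 - 2 * ⟪v, z⟫ * ⟪x, v⟫ * ⟪x, z⟫ := by
    rcases le_or_gt 0 (⟪x, v⟫ * ⟪x, z⟫) with h | h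
    · nlinarith [sq_nonneg (‖v‖ * ⟪x, z⟫ - ‖z‖ * ⟪x, v⟫),
        mul_nonneg h (sub_nonneg.mpr h1b)]
    · nlinarith [sq_nonneg (‖v‖ * ⟪x, z⟫ + ‖z‖ * ⟪x, v⟫),
        mul_nonneg (neg_nonneg.mpr h.le) (by linarith : (0:ℝ) ≤ ⟪v, z⟫ + ‖v‖ * ‖z‖)]
  nlinarith [mul_nonneg (mul_nonneg hc hl) hK, mul_nonneg (mul_nonneg hc hc) (sub_nonneg.mpr hi2)]

section main
variable {n : ℕ} {a : ℝ} {x : EuclideanSpace ℝ (Fin n)}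

set_option maxHeartbeats 2000000 in
theorem fa_pos (ha0 : 0 ≤ a) (ha1 : a ≤ 1) (hxn : ‖x‖ < 1)
    (y : EuclideanSpace ℝ (Fin n)) (hy : y ≠ 0) : 0 < Fa n a x y := by
  have hs1 : ‖x‖ ^ 2 < 1 := by nlinarith [norm_nonneg x]
  have hyn' : (0:ℝ) < ‖y‖ := norm_pos_iff.mpr hy
  have hyn : (0:ℝ) < ‖y‖ ^ 2 := by positivity
  set t : ℝ := ⟪x, y⟫ with ht
  have h1 : t ^ 2 < ‖y‖ ^ 2 - (‖x‖ ^ 2 * ‖y‖ ^ 2 - t ^ 2) := by nlinarith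
  have h2 : |t| < Real.sqrt (‖y‖ ^ 2 - (‖x‖ ^ 2 * ‖y‖ ^ 2 - t ^ 2)) := by
    have := Real.sqrt_lt_sqrt (sq_nonneg t) h1
    rwa [Real.sqrt_sq_eq_abs] at this
  have h3 : -|t| ≤ a * t := by
    rcases abs_cases t with ⟨h, _⟩ | ⟨h, _⟩ <;> nlinarith
  rw [Fa]
  apply div_pos _ (by linarith)
  have := abs_nonneg t
  linarith

set_option maxHeartbeats 2000000 in
theorem fa_ub (ha0 : 0 ≤ a) (ha1 : a ≤ 1) (hxn : ‖x‖ < 1)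
    (α y : EuclideanSpace ℝ (Fin n)) (hy : y ≠ 0) :
    ⟪α, y⟫ / Fa n a x y ≤ FaStar n a x α := by
  have hs0 : (0:ℝ) ≤ ‖x‖ ^ 2 := sq_nonneg _
  have hs1 : ‖x‖ ^ 2 < 1 := by nlinarith [norm_nonneg x]
  have hc : (0:ℝ) < 1 - ‖x‖ ^ 2 := by linarith
  have ha2 : (0:ℝ) ≤ 1 - a ^ 2 := by nlinarith
  have hu : (0:ℝ) < 1 - a ^ 2 * ‖x‖ ^ 2 := by nlinarith
  have hp2 : (⟪x, α⟫ : ℝ) ^ 2 ≤ ‖x‖ ^ 2 * ‖α‖ ^ 2 := by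
    have h := real_inner_mul_inner_self_le x α
    rw [real_inner_self_eq_norm_sq, real_inner_self_eq_norm_sq] at h
    nlinarith [h]
  have hP0 : (0:ℝ) ≤ (1 - a ^ 2 * ‖x‖ ^ 2) * ‖α‖ ^ 2 - (1 - a ^ 2) * ⟪x, α⟫ ^ 2 := by
    nlinarith [mul_le_mul_of_nonneg_left hp2 ha2, sq_nonneg ‖α‖]
  have hD0 : (0:ℝ) ≤ (1 - ‖x‖ ^ 2) *
      ((1 - a ^ 2 * ‖x‖ ^ 2) * ‖α‖ ^ 2 - (1 - a ^ 2) * ⟪x, α⟫ ^ 2) :=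
    mul_nonneg hc.le hP0
  obtain ⟨rD, hrD0, hrD2, hrDval⟩ : ∃ r : ℝ, 0 ≤ r ∧
      r ^ 2 = (1 - ‖x‖ ^ 2) * ((1 - a ^ 2 * ‖x‖ ^ 2) * ‖α‖ ^ 2 - (1 - a ^ 2) * ⟪x, α⟫ ^ 2) ∧
      Real.sqrt ((1 - ‖x‖ ^ 2) * (1 - a ^ 2 * ‖x‖ ^ 2) * ‖α‖ ^ 2 -
        (1 - a ^ 2) * (1 - ‖x‖ ^ 2) * ⟪x, α⟫ ^ 2) = r :=
    ⟨_, Real.sqrt_nonneg _, Real.sq_sqrt hD0, by rw [show (1 - ‖x‖ ^ 2) * (1 - a ^ 2 * ‖x‖ ^ 2) *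
      ‖α‖ ^ 2 - (1 - a ^ 2) * (1 - ‖x‖ ^ 2) * ⟪x, α⟫ ^ 2 = (1 - ‖x‖ ^ 2) *
      ((1 - a ^ 2 * ‖x‖ ^ 2) * ‖α‖ ^ 2 - (1 - a ^ 2) * ⟪x, α⟫ ^ 2) by ring]⟩
  have hFs : FaStar n a x α =
      (rD - a * (1 - ‖x‖ ^ 2) * ⟪x, α⟫) / (1 - a ^ 2 * ‖x‖ ^ 2) := by
    rw [FaStar, hrDval]
  rw [hFs]
  have hg0 : 0 < Fa n a x y := fa_pos ha0 ha1 hxn y hy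
  obtain ⟨g, hg_def⟩ : ∃ g : ℝ, g = Fa n a x y := ⟨_, rfl⟩
  rw [← hg_def] at hg0 ⊢
  have hsq : Real.sqrt (‖y‖ ^ 2 - (‖x‖ ^ 2 * ‖y‖ ^ 2 - ⟪x, y⟫ ^ 2)) =
      (1 - ‖x‖ ^ 2) * g - a * ⟪x, y⟫ := by
    rw [hg_def, Fa]
    field_simp
    ring
  have hQ0 : (0:ℝ) ≤ ‖y‖ ^ 2 - (‖x‖ ^ 2 * ‖y‖ ^ 2 - ⟪x, y⟫ ^ 2) := by
    nlinarith [sq_nonneg ‖y‖, sq_nonneg (⟪x, y⟫ : ℝ)]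
  have hQ : ‖y‖ ^ 2 - (‖x‖ ^ 2 * ‖y‖ ^ 2 - ⟪x, y⟫ ^ 2) =
      ((1 - ‖x‖ ^ 2) * g - a * ⟪x, y⟫) ^ 2 := by
    rw [← hsq, Real.sq_sqrt hQ0]
  obtain ⟨z, hz_def⟩ : ∃ z : EuclideanSpace ℝ (Fin n),
      z = (1 - a ^ 2 * ‖x‖ ^ 2) • y + (a * (1 - ‖x‖ ^ 2) * g) • x := ⟨_, rfl⟩
  obtain ⟨v, hv_def⟩ : ∃ v : EuclideanSpace ℝ (Fin n),
      v = (1 - a ^ 2 * ‖x‖ ^ 2) • α - ((1 - a ^ 2) * ⟪x, α⟫) • x := ⟨_, rfl⟩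
  have hza : (⟪α, z⟫ : ℝ) = (1 - a ^ 2 * ‖x‖ ^ 2) * ⟪α, y⟫ +
      a * (1 - ‖x‖ ^ 2) * g * ⟪x, α⟫ := by
    rw [hz_def]
    simp only [inner_add_right, real_inner_smul_right]
    rw [real_inner_comm x α]
  have hzx : (⟪x, z⟫ : ℝ) = (1 - a ^ 2 * ‖x‖ ^ 2) * ⟪x, y⟫ +
      a * (1 - ‖x‖ ^ 2) * g * ‖x‖ ^ 2 := by
    rw [hz_def]
    simp only [inner_add_right, real_inner_smul_right, real_inner_self_eq_norm_sq]
  have hzn : ‖z‖ ^ 2 = (1 - a ^ 2 * ‖x‖ ^ 2) ^ 2 * ‖y‖ ^ 2 +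
      2 * ((1 - a ^ 2 * ‖x‖ ^ 2) * (a * (1 - ‖x‖ ^ 2) * g) * ⟪x, y⟫) +
      (a * (1 - ‖x‖ ^ 2) * g) ^ 2 * ‖x‖ ^ 2 := by
    rw [hz_def, norm_add_sq_real]
    simp only [real_inner_smul_left, real_inner_smul_right, norm_smul, mul_pow,
      Real.norm_eq_abs, sq_abs]
    rw [real_inner_comm x y]
    ring
  have hxv : (⟪x, v⟫ : ℝ) = (1 - a ^ 2 * ‖x‖ ^ 2) * ⟪x, α⟫ -
      (1 - a ^ 2) * ⟪x, α⟫ * ‖x‖ ^ 2 := by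
    rw [hv_def]
    simp only [inner_sub_right, real_inner_smul_right, real_inner_self_eq_norm_sq]
  have hvz : (⟪v, z⟫ : ℝ) = (1 - a ^ 2 * ‖x‖ ^ 2) * ⟪α, z⟫ -
      (1 - a ^ 2) * ⟪x, α⟫ * ⟪x, z⟫ := by
    rw [hv_def]
    simp only [inner_sub_left, real_inner_smul_left]
  have hvv : ‖v‖ ^ 2 = (1 - a ^ 2 * ‖x‖ ^ 2) ^ 2 * ‖α‖ ^ 2 -
      2 * ((1 - a ^ 2 * ‖x‖ ^ 2) * ((1 - a ^ 2) * ⟪x, α⟫) * ⟪x, α⟫) +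
      ((1 - a ^ 2) * ⟪x, α⟫) ^ 2 * ‖x‖ ^ 2 := by
    rw [hv_def, norm_sub_sq_real]
    simp only [real_inner_smul_left, real_inner_smul_right, norm_smul, mul_pow,
      Real.norm_eq_abs, sq_abs]
    rw [real_inner_comm x α]
    ring
  have key := gcs (1 - ‖x‖ ^ 2) (1 - a ^ 2) hc.le ha2 x v z
  rw [hvz, hxv, hzx, hza, hvv, hzn] at key
  have hI2 : ((1 - a ^ 2 * ‖x‖ ^ 2) * ⟪α, y⟫ + a * (1 - ‖x‖ ^ 2) * g * ⟪x, α⟫) ^ 2 ≤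
      ((1 - ‖x‖ ^ 2) * ((1 - a ^ 2 * ‖x‖ ^ 2) * ‖α‖ ^ 2 - (1 - a ^ 2) * ⟪x, α⟫ ^ 2)) * g ^ 2 := by
    have hT : (0:ℝ) < ((1 - ‖x‖ ^ 2) * (1 - a ^ 2 * ‖x‖ ^ 2)) ^ 2 := by positivity
    apply le_of_mul_le_mul_left _ hT
    calc ((1 - ‖x‖ ^ 2) * (1 - a ^ 2 * ‖x‖ ^ 2)) ^ 2 *
          ((1 - a ^ 2 * ‖x‖ ^ 2) * ⟪α, y⟫ + a * (1 - ‖x‖ ^ 2) * g * ⟪x, α⟫) ^ 2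
        = ((1 - ‖x‖ ^ 2) * ((1 - a ^ 2 * ‖x‖ ^ 2) *
            ((1 - a ^ 2 * ‖x‖ ^ 2) * ⟪α, y⟫ + a * (1 - ‖x‖ ^ 2) * g * ⟪x, α⟫) -
            (1 - a ^ 2) * ⟪x, α⟫ * ((1 - a ^ 2 * ‖x‖ ^ 2) * ⟪x, y⟫ +
              a * (1 - ‖x‖ ^ 2) * g * ‖x‖ ^ 2)) + (1 - a ^ 2) *
            ((1 - a ^ 2 * ‖x‖ ^ 2) * ⟪x, α⟫ - (1 - a ^ 2) * ⟪x, α⟫ * ‖x‖ ^ 2) *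
            ((1 - a ^ 2 * ‖x‖ ^ 2) * ⟪x, y⟫ + a * (1 - ‖x‖ ^ 2) * g * ‖x‖ ^ 2)) ^ 2 := by
          ring
      _ ≤ ((1 - ‖x‖ ^ 2) * ((1 - a ^ 2 * ‖x‖ ^ 2) ^ 2 * ‖α‖ ^ 2 -
            2 * ((1 - a ^ 2 * ‖x‖ ^ 2) * ((1 - a ^ 2) * ⟪x, α⟫) * ⟪x, α⟫) +
            ((1 - a ^ 2) * ⟪x, α⟫) ^ 2 * ‖x‖ ^ 2) + (1 - a ^ 2) *
            ((1 - a ^ 2 * ‖x‖ ^ 2) * ⟪x, α⟫ - (1 - a ^ 2) * ⟪x, α⟫ * ‖x‖ ^ 2) ^ 2) *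
          ((1 - ‖x‖ ^ 2) * ((1 - a ^ 2 * ‖x‖ ^ 2) ^ 2 * ‖y‖ ^ 2 +
            2 * ((1 - a ^ 2 * ‖x‖ ^ 2) * (a * (1 - ‖x‖ ^ 2) * g) * ⟪x, y⟫) +
            (a * (1 - ‖x‖ ^ 2) * g) ^ 2 * ‖x‖ ^ 2) + (1 - a ^ 2) *
            ((1 - a ^ 2 * ‖x‖ ^ 2) * ⟪x, y⟫ + a * (1 - ‖x‖ ^ 2) * g * ‖x‖ ^ 2) ^ 2) := key
      _ = ((1 - a ^ 2 * ‖x‖ ^ 2) * ((1 - ‖x‖ ^ 2) * ((1 - a ^ 2 * ‖x‖ ^ 2) * ‖α‖ ^ 2 -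
            (1 - a ^ 2) * ⟪x, α⟫ ^ 2))) * ((1 - a ^ 2 * ‖x‖ ^ 2) *
            ((1 - ‖x‖ ^ 2) ^ 2 * g ^ 2)) := by
          linear_combination ((1 - a ^ 2 * ‖x‖ ^ 2) ^ 2 * ((1 - ‖x‖ ^ 2) *
            ((1 - a ^ 2 * ‖x‖ ^ 2) ^ 2 * ‖α‖ ^ 2 -
            2 * ((1 - a ^ 2 * ‖x‖ ^ 2) * ((1 - a ^ 2) * ⟪x, α⟫) * ⟪x, α⟫) +
            ((1 - a ^ 2) * ⟪x, α⟫) ^ 2 * ‖x‖ ^ 2) + (1 - a ^ 2) *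
            ((1 - a ^ 2 * ‖x‖ ^ 2) * ⟪x, α⟫ - (1 - a ^ 2) * ⟪x, α⟫ * ‖x‖ ^ 2) ^ 2)) * hQ
      _ = ((1 - ‖x‖ ^ 2) * (1 - a ^ 2 * ‖x‖ ^ 2)) ^ 2 *
          (((1 - ‖x‖ ^ 2) * ((1 - a ^ 2 * ‖x‖ ^ 2) * ‖α‖ ^ 2 -
            (1 - a ^ 2) * ⟪x, α⟫ ^ 2)) * g ^ 2) := by ring
  have hI : (1 - a ^ 2 * ‖x‖ ^ 2) * ⟪α, y⟫ + a * (1 - ‖x‖ ^ 2) * g * ⟪x, α⟫ ≤ rD * g := by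
    apply le_of_sq_le_sq' (mul_nonneg hrD0 hg0.le)
    rw [mul_pow, hrD2]
    exact hI2
  rw [div_le_div_iff₀ hg0 hu]
  linarith [hI]

set_option maxHeartbeats 2000000 in
theorem fa_mem (ha0 : 0 ≤ a) (ha1 : a ≤ 1) (hxn : ‖x‖ < 1)
    (α : EuclideanSpace ℝ (Fin n)) (hα : α ≠ 0) :
    ∃ y : EuclideanSpace ℝ (Fin n), y ≠ 0 ∧ ⟪α, y⟫ / Fa n a x y = FaStar n a x α := by
  have hs0 : (0:ℝ) ≤ ‖x‖ ^ 2 := sq_nonneg _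
  have hs1 : ‖x‖ ^ 2 < 1 := by nlinarith [norm_nonneg x]
  have hc : (0:ℝ) < 1 - ‖x‖ ^ 2 := by linarith
  have ha2 : (0:ℝ) ≤ 1 - a ^ 2 := by nlinarith
  have hu : (0:ℝ) < 1 - a ^ 2 * ‖x‖ ^ 2 := by nlinarith
  have hA2 : (0:ℝ) < ‖α‖ ^ 2 := by
    have := norm_pos_iff.mpr hα
    positivity
  have hp2 : (⟪x, α⟫ : ℝ) ^ 2 ≤ ‖x‖ ^ 2 * ‖α‖ ^ 2 := by
    have h := real_inner_mul_inner_self_le x α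
    rw [real_inner_self_eq_norm_sq, real_inner_self_eq_norm_sq] at h
    nlinarith [h]
  have hpA : (⟪x, α⟫ : ℝ) ^ 2 < ‖α‖ ^ 2 := by nlinarith
  have hP0 : (0:ℝ) < (1 - a ^ 2 * ‖x‖ ^ 2) * ‖α‖ ^ 2 - (1 - a ^ 2) * ⟪x, α⟫ ^ 2 := by
    nlinarith [mul_le_mul_of_nonneg_left hp2 ha2]
  have hD0 : (0:ℝ) < (1 - ‖x‖ ^ 2) *
      ((1 - a ^ 2 * ‖x‖ ^ 2) * ‖α‖ ^ 2 - (1 - a ^ 2) * ⟪x, α⟫ ^ 2) :=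
    mul_pos hc hP0
  obtain ⟨rD, hrD0, hrD2, hrDval⟩ : ∃ r : ℝ, 0 < r ∧
      r ^ 2 = (1 - ‖x‖ ^ 2) * ((1 - a ^ 2 * ‖x‖ ^ 2) * ‖α‖ ^ 2 - (1 - a ^ 2) * ⟪x, α⟫ ^ 2) ∧
      Real.sqrt ((1 - ‖x‖ ^ 2) * (1 - a ^ 2 * ‖x‖ ^ 2) * ‖α‖ ^ 2 -
        (1 - a ^ 2) * (1 - ‖x‖ ^ 2) * ⟪x, α⟫ ^ 2) = r :=
    ⟨_, Real.sqrt_pos.mpr hD0, Real.sq_sqrt hD0.le, by rw [show (1 - ‖x‖ ^ 2) *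
      (1 - a ^ 2 * ‖x‖ ^ 2) * ‖α‖ ^ 2 - (1 - a ^ 2) * (1 - ‖x‖ ^ 2) * ⟪x, α⟫ ^ 2 =
      (1 - ‖x‖ ^ 2) * ((1 - a ^ 2 * ‖x‖ ^ 2) * ‖α‖ ^ 2 - (1 - a ^ 2) * ⟪x, α⟫ ^ 2) by ring]⟩
  have hFs : FaStar n a x α =
      (rD - a * (1 - ‖x‖ ^ 2) * ⟪x, α⟫) / (1 - a ^ 2 * ‖x‖ ^ 2) := by
    rw [FaStar, hrDval]
  obtain ⟨P, hP_def⟩ : ∃ P : ℝ,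
      P = (1 - a ^ 2 * ‖x‖ ^ 2) * ‖α‖ ^ 2 - (1 - a ^ 2) * ⟪x, α⟫ ^ 2 := ⟨_, rfl⟩
  have hPpos : 0 < P := hP_def ▸ hP0
  have hrD2P : rD ^ 2 = (1 - ‖x‖ ^ 2) * P := by rw [hP_def]; exact hrD2
  have hsqlt : (a * ⟪x, α⟫) ^ 2 * (1 - ‖x‖ ^ 2) < P := by
    rw [hP_def]
    nlinarith [mul_pos hu (sub_pos.mpr hpA)]
  obtain ⟨y, hy_def⟩ : ∃ y : EuclideanSpace ℝ (Fin n),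
      y = (1 - a ^ 2 * ‖x‖ ^ 2) • α - ((1 - a ^ 2) * ⟪x, α⟫ + a * rD) • x := ⟨_, rfl⟩
  have hya : (⟪α, y⟫ : ℝ) = (1 - a ^ 2 * ‖x‖ ^ 2) * ‖α‖ ^ 2 -
      ((1 - a ^ 2) * ⟪x, α⟫ + a * rD) * ⟪x, α⟫ := by
    rw [hy_def]
    simp only [inner_sub_right, real_inner_smul_right, real_inner_self_eq_norm_sq]
    rw [real_inner_comm x α]
  have hyx : (⟪x, y⟫ : ℝ) = (1 - a ^ 2 * ‖x‖ ^ 2) * ⟪x, α⟫ -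
      ((1 - a ^ 2) * ⟪x, α⟫ + a * rD) * ‖x‖ ^ 2 := by
    rw [hy_def]
    simp only [inner_sub_right, real_inner_smul_right, real_inner_self_eq_norm_sq]
  have hyn : ‖y‖ ^ 2 = (1 - a ^ 2 * ‖x‖ ^ 2) ^ 2 * ‖α‖ ^ 2 -
      2 * ((1 - a ^ 2 * ‖x‖ ^ 2) * ((1 - a ^ 2) * ⟪x, α⟫ + a * rD) * ⟪x, α⟫) +
      ((1 - a ^ 2) * ⟪x, α⟫ + a * rD) ^ 2 * ‖x‖ ^ 2 := by
    rw [hy_def, norm_sub_sq_real]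
    simp only [real_inner_smul_left, real_inner_smul_right, norm_smul, mul_pow,
      Real.norm_eq_abs, sq_abs]
    rw [real_inner_comm x α]
    ring
  have hkey : a * ⟪x, α⟫ * rD < P := by
    rcases le_or_gt (a * ⟪x, α⟫) 0 with h | h
    · have h1 : a * ⟪x, α⟫ * rD ≤ 0 := mul_nonpos_iff.mpr (Or.inr ⟨h, hrD0.le⟩)
      linarith
    · have h1 : (a * ⟪x, α⟫ * rD) ^ 2 < P ^ 2 := by
        have h2 : (a * ⟪x, α⟫ * rD) ^ 2 = ((a * ⟪x, α⟫) ^ 2 * (1 - ‖x‖ ^ 2)) * P := by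
          rw [show (a * ⟪x, α⟫ * rD) ^ 2 = (a * ⟪x, α⟫) ^ 2 * rD ^ 2 by ring, hrD2P]
          ring
        rw [h2]
        nlinarith [mul_lt_mul_of_pos_right hsqlt hPpos]
      exact lt_of_sq_lt_sq' hPpos.le h1
  have hpos : 0 < (⟪α, y⟫ : ℝ) := by
    rw [hya]
    have e : (1 - a ^ 2 * ‖x‖ ^ 2) * ‖α‖ ^ 2 - ((1 - a ^ 2) * ⟪x, α⟫ + a * rD) * ⟪x, α⟫ =
        P - a * ⟪x, α⟫ * rD := by rw [hP_def]; ring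
    rw [e]
    linarith
  have hyne : y ≠ 0 := by
    intro h
    rw [h, inner_zero_right] at hpos
    exact lt_irrefl 0 hpos
  have hge : 0 ≤ rD - a * (1 - ‖x‖ ^ 2) * ⟪x, α⟫ := by
    rcases le_or_gt (a * ⟪x, α⟫) 0 with h | h
    · nlinarith [hrD0, mul_nonneg (neg_nonneg.mpr h) hc.le]
    · have h1 : (a * (1 - ‖x‖ ^ 2) * ⟪x, α⟫) ^ 2 < rD ^ 2 := by
        rw [hrD2P]
        nlinarith [mul_lt_mul_of_pos_left hsqlt hc]
      have := lt_of_sq_lt_sq' hrD0.le h1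
      linarith
  have hQeq : ‖y‖ ^ 2 - (‖x‖ ^ 2 * ‖y‖ ^ 2 - ⟪x, y⟫ ^ 2) =
      (rD - a * (1 - ‖x‖ ^ 2) * ⟪x, α⟫) ^ 2 := by
    rw [hyn, hyx]
    linear_combination (-(1 - a ^ 2 * ‖x‖ ^ 2)) * hrD2
  have hFval : Fa n a x y = (1 - a ^ 2 * ‖x‖ ^ 2) * rD / (1 - ‖x‖ ^ 2) := by
    rw [Fa, hQeq, Real.sqrt_sq hge, hyx]
    field_simp
    ring
  have hFpos : (0:ℝ) < (1 - a ^ 2 * ‖x‖ ^ 2) * rD / (1 - ‖x‖ ^ 2) := by positivity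
  refine ⟨y, hyne, ?_⟩
  rw [hFval, hFs, hya, div_eq_div_iff (ne_of_gt hFpos) hu.ne']
  rw [show (rD - a * (1 - ‖x‖ ^ 2) * ⟪x, α⟫) * ((1 - a ^ 2 * ‖x‖ ^ 2) * rD / (1 - ‖x‖ ^ 2)) =
      (rD - a * (1 - ‖x‖ ^ 2) * ⟪x, α⟫) * ((1 - a ^ 2 * ‖x‖ ^ 2) * rD) / (1 - ‖x‖ ^ 2) by ring,
    eq_comm, div_eq_iff hc.ne', eq_comm]
  linear_combination (-(1 - a ^ 2 * ‖x‖ ^ 2)) * hrD2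

end main

set_option maxHeartbeats 2000000 in
theorem stmt_2 (n : ℕ) (hn : 2 ≤ n) (a : ℝ) (ha : a ∈ Set.Icc (0 : ℝ) 1)
    (x : EuclideanSpace ℝ (Fin n)) (hx : x ∈ ball (0 : EuclideanSpace ℝ (Fin n)) 1)
    (α : EuclideanSpace ℝ (Fin n)) :
    IsLUB {r : ℝ | ∃ y : EuclideanSpace ℝ (Fin n), y ≠ 0 ∧ r = (inner ℝ α y : ℝ) / Fa n a x y}
      (FaStar n a x α) := by
  obtain ⟨ha0, ha1⟩ := ha
  have hxn : ‖x‖ < 1 := by rwa [mem_ball_zero_iff] at hx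
  constructor
  · rintro r ⟨y, hy, rfl⟩
    exact fa_ub ha0 ha1 hxn α y hy
  · intro b hb
    rcases eq_or_ne α 0 with rfl | hα
    · have h0 : FaStar n a x 0 = 0 := by
        simp [FaStar]
      rw [h0]
      have hy0 : (EuclideanSpace.single (⟨0, by omega⟩ : Fin n) (1:ℝ)) ≠ 0 := by
        intro h
        have := congrArg (fun v => v (⟨0, by omega⟩ : Fin n)) h
        simp at this
      have : (0:ℝ) ∈ {r : ℝ | ∃ y : EuclideanSpace ℝ (Fin n), y ≠ 0 ∧
          r = (inner ℝ (0 : EuclideanSpace ℝ (Fin n)) y : ℝ) / Fa n a x y} := by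
        exact ⟨_, hy0, by simp⟩
      exact hb this
    · obtain ⟨y, hy, hval⟩ := fa_mem ha0 ha1 hxn α hα
      exact hval ▸ hb ⟨y, hy, hval.symm ▸ rfl⟩
end

section
/- For every a ∈ [0,1] and every x in the open unit ball B ⊂ ℝ^n (n ≥ 2), the supremum over nonzero y ∈ ℝ^n of the ratio F_a(x,y)/F_a(x,−y) equals (1 + a|x|)/(1 − a|x|). -/
open Metric

theorem stmt_3 (n : ℕ) (hn : 2 ≤ n) (a : ℝ) (ha : a ∈ Set.Icc (0 : ℝ) 1)
    (x : EuclideanSpace ℝ (Fin n)) (hx : x ∈ ball (0 : EuclideanSpace ℝ (Fin n)) 1) :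
    IsLUB {r : ℝ | ∃ y : EuclideanSpace ℝ (Fin n), y ≠ 0 ∧ r = Fa n a x y / Fa n a x (-y)}
      ((1 + a * ‖x‖) / (1 - a * ‖x‖)) := by
  obtain ⟨ha0, ha1⟩ := ha
  rw [mem_ball, dist_zero_right] at hx
  have hxn : (0:ℝ) ≤ ‖x‖ := norm_nonneg x
  have hx2 : (0:ℝ) < 1 - ‖x‖ ^ 2 := by nlinarith
  have hax : a * ‖x‖ < 1 := by nlinarith
  have hax0 : (0:ℝ) ≤ a * ‖x‖ := mul_nonneg ha0 hxn
  constructor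
  · rintro r ⟨y, hy, rfl⟩
    have hyn : (0:ℝ) < ‖y‖ := norm_pos_iff.mpr hy
    set t : ℝ := (inner ℝ x y : ℝ) with ht
    have hcs : |t| ≤ ‖x‖ * ‖y‖ := abs_real_inner_le_norm x y
    have hcs2 : t ^ 2 ≤ ‖x‖ ^ 2 * ‖y‖ ^ 2 := by
      nlinarith [abs_nonneg t, sq_abs t]
    set S : ℝ := Real.sqrt (‖y‖ ^ 2 - (‖x‖ ^ 2 * ‖y‖ ^ 2 - t ^ 2)) with hS
    have hSnn : 0 ≤ S := Real.sqrt_nonneg _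
    have hSsq : S ^ 2 = ‖y‖ ^ 2 * (1 - ‖x‖ ^ 2) + t ^ 2 := by
      rw [hS, Real.sq_sqrt (by nlinarith)]; ring
    have hSt : |t| < S := by
      have h1 : t ^ 2 < S ^ 2 := by nlinarith [mul_pos (pow_pos hyn 2) hx2]
      have h2 : |t| ^ 2 < S ^ 2 := by rwa [sq_abs]
      exact lt_of_pow_lt_pow_left₀ 2 hSnn h2
    have htS : t ≤ ‖x‖ * S := by
      have h1 : t ^ 2 ≤ (‖x‖ * S) ^ 2 := by nlinarith
      have h2 : |t| ≤ ‖x‖ * S := by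
        nlinarith [abs_nonneg t, sq_abs t, mul_nonneg hxn hSnn]
      exact (le_abs_self t).trans h2
    have hden : 0 < S - a * t := by
      have : a * t ≤ |t| := by
        rcases le_or_gt t 0 with h | h
        · nlinarith [abs_nonneg t, neg_abs_le t]
        · calc a * t ≤ 1 * t := by nlinarith
            _ ≤ |t| := by rw [one_mul]; exact le_abs_self t
      linarith
    have hFy : Fa n a x y = (S + a * t) / (1 - ‖x‖ ^ 2) := rfl
    have hFny : Fa n a x (-y) = (S - a * t) / (1 - ‖x‖ ^ 2) := by
      simp only [Fa, inner_neg_right, norm_neg]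
      rw [show ‖y‖ ^ 2 - (‖x‖ ^ 2 * ‖y‖ ^ 2 - (-(inner ℝ x y : ℝ)) ^ 2)
          = ‖y‖ ^ 2 - (‖x‖ ^ 2 * ‖y‖ ^ 2 - t ^ 2) by rw [← ht]; ring, ← hS, ← ht]
      ring
    rw [hFy, hFny, div_div_div_cancel_right₀ (ne_of_gt hx2)]
    rw [div_le_div_iff₀ hden (by linarith)]
    have key : a * t ≤ a * (‖x‖ * S) := mul_le_mul_of_nonneg_left htS ha0
    nlinarith
  · intro r hr
    rcases eq_or_ne x 0 with hx0 | hx0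
    · subst hx0
      have h1 : (1:ℝ) ∈ {r : ℝ | ∃ y : EuclideanSpace ℝ (Fin n), y ≠ 0 ∧
          r = Fa n a 0 y / Fa n a 0 (-y)} := by
        refine ⟨EuclideanSpace.single (⟨0, by omega⟩ : Fin n) (1:ℝ), ?_, ?_⟩
        · intro h
          have := congrArg norm h
          rw [EuclideanSpace.norm_single, norm_zero] at this
          norm_num at this
        · have hys : ‖EuclideanSpace.single (⟨0, by omega⟩ : Fin n) (1:ℝ)‖ = 1 := by
            rw [EuclideanSpace.norm_single]; norm_num
          simp [Fa, hys, inner_zero_left]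
      have := hr h1
      simpa using this
    · have hxn' : (0:ℝ) < ‖x‖ := norm_pos_iff.mpr hx0
      have hself : (inner ℝ x x : ℝ) = ‖x‖ ^ 2 := real_inner_self_eq_norm_sq x
      have hFx : Fa n a x x = (‖x‖ + a * ‖x‖ ^ 2) / (1 - ‖x‖ ^ 2) := by
        simp only [Fa, hself]
        rw [show ‖x‖^2 - (‖x‖^2*‖x‖^2 - (‖x‖^2)^2) = ‖x‖^2 by ring, Real.sqrt_sq hxn]
      have hFnx : Fa n a x (-x) = (‖x‖ - a * ‖x‖ ^ 2) / (1 - ‖x‖ ^ 2) := by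
        simp only [Fa, inner_neg_right, norm_neg, hself]
        rw [show ‖x‖^2 - (‖x‖^2*‖x‖^2 - (-(‖x‖^2))^2) = ‖x‖^2 by ring, Real.sqrt_sq hxn]
        ring
      have h1 : (1 + a * ‖x‖) / (1 - a * ‖x‖) ∈ {r : ℝ | ∃ y : EuclideanSpace ℝ (Fin n),
          y ≠ 0 ∧ r = Fa n a x y / Fa n a x (-y)} := by
        refine ⟨x, hx0, ?_⟩
        rw [hFx, hFnx, div_div_div_cancel_right₀ (ne_of_gt hx2)]
        rw [div_eq_div_iff (by nlinarith) (by nlinarith)]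
        ring
      exact hr h1
end

section
/- Let r_{F_a} denote the supremum over x in the open unit ball B ⊂ ℝ^n (n ≥ 2) and nonzero y ∈ ℝ^n of F_a(x,y)/F_a(x,−y) (the reversibility constant of (B, F_a)). If a ∈ [0,1) then r_{F_a} = (1+a)/(1−a), while if a = 1 the supremum is +∞ (the ratios F_1(x,y)/F_1(x,−y) are unbounded on B). -/
open Metric

/-- The set of reversibility ratios `F_a(x,y)/F_a(x,-y)` over `x` in the unit ball
and nonzero `y`. -/
def revRatios (n : ℕ) (a : ℝ) : Set ℝ :=
  {r : ℝ | ∃ x ∈ ball (0 : EuclideanSpace ℝ (Fin n)) 1,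
    ∃ y : EuclideanSpace ℝ (Fin n), y ≠ 0 ∧ r = Fa n a x y / Fa n a x (-y)}

lemma ratio_mem (n : ℕ) (hn : 2 ≤ n) (a : ℝ) (ha0 : 0 ≤ a) (ha1 : a ≤ 1)
    (r : ℝ) (hr0 : 0 ≤ r) (hr1 : r < 1) :
    (1 + a * r) / (1 - a * r) ∈ revRatios n a := by
  have hn0 : 0 < n := by omega
  set e : EuclideanSpace ℝ (Fin n) := EuclideanSpace.single ⟨0, hn0⟩ 1 with he
  have hne : ‖e‖ = 1 := by simp [he]
  have har : a * r < 1 := by nlinarith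
  have hr2 : (0:ℝ) < 1 - r ^ 2 := by nlinarith
  refine ⟨r • e, ?_, e, ?_, ?_⟩
  · simp [mem_ball, norm_smul, hne, abs_of_nonneg hr0, hr1]
  · intro h
    apply_fun (‖·‖) at h
    simp [hne] at h
  · have hxn : ‖r • e‖ = r := by simp [norm_smul, hne, abs_of_nonneg hr0]
    have hinner : (inner ℝ (r • e) e : ℝ) = r := by
      rw [real_inner_smul_left, real_inner_self_eq_norm_sq, hne]; ring
    have hinner' : (inner ℝ (r • e) (-e) : ℝ) = -r := by
      rw [inner_neg_right, hinner]
    unfold Fa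
    rw [hxn, hinner, hinner', norm_neg, hne]
    have e1 : (1:ℝ) ^ 2 - (r ^ 2 * 1 ^ 2 - r ^ 2) = 1 := by ring
    have e2 : (1:ℝ) ^ 2 - (r ^ 2 * 1 ^ 2 - (-r) ^ 2) = 1 := by ring
    rw [e1, e2, Real.sqrt_one]
    have h1 : (1:ℝ) - a * r ≠ 0 := by linarith
    have h2 : (1:ℝ) - r ^ 2 ≠ 0 := ne_of_gt hr2
    have h4 : (1:ℝ) + a * (-r) = 1 - a * r := by ring
    rw [h4, div_div_div_comm, div_self h2, div_one]

lemma ratio_le (n : ℕ) (a : ℝ) (ha0 : 0 ≤ a) (ha1 : a < 1)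
    {s : ℝ} (hs : s ∈ revRatios n a) : s ≤ (1 + a) / (1 - a) := by
  obtain ⟨x, hx, y, hy, rfl⟩ := hs
  set t : ℝ := inner ℝ x y with ht
  have hx1 : ‖x‖ < 1 := by simpa [mem_ball] using hx
  have hx0 : (0:ℝ) ≤ ‖x‖ := norm_nonneg x
  have hy0 : (0:ℝ) < ‖y‖ := norm_pos_iff.2 hy
  have hd : (0:ℝ) < 1 - ‖x‖ ^ 2 := by nlinarith
  have hgt : t ^ 2 < ‖y‖ ^ 2 - (‖x‖ ^ 2 * ‖y‖ ^ 2 - t ^ 2) := by nlinarith [mul_pos (pow_pos hy0 2) hd]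
  set S := Real.sqrt (‖y‖ ^ 2 - (‖x‖ ^ 2 * ‖y‖ ^ 2 - t ^ 2)) with hS
  have hSgt : |t| < S := by
    rw [hS, ← Real.sqrt_sq_eq_abs]
    exact Real.sqrt_lt_sqrt (sq_nonneg t) hgt
  have htle : t ≤ |t| := le_abs_self t
  have htle' : -t ≤ |t| := neg_le_abs t
  have hatS : a * t < S := by nlinarith
  have hatS' : -(a * t) < S := by nlinarith
  have hFy : Fa n a x y = (S + a * t) / (1 - ‖x‖ ^ 2) := rfl
  have hFny : Fa n a x (-y) = (S - a * t) / (1 - ‖x‖ ^ 2) := by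
    unfold Fa
    rw [norm_neg, inner_neg_right, ← ht]
    have : ‖y‖ ^ 2 - (‖x‖ ^ 2 * ‖y‖ ^ 2 - (-t) ^ 2)
        = ‖y‖ ^ 2 - (‖x‖ ^ 2 * ‖y‖ ^ 2 - t ^ 2) := by ring
    rw [this, ← hS]
    ring_nf
  rw [hFy, hFny]
  have hden : (0:ℝ) < S - a * t := by linarith
  have hnum : (0:ℝ) < S + a * t := by linarith
  have hdne : (1:ℝ) - ‖x‖ ^ 2 ≠ 0 := ne_of_gt hd
  have hrw : (S + a * t) / (1 - ‖x‖ ^ 2) / ((S - a * t) / (1 - ‖x‖ ^ 2))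
      = (S + a * t) / (S - a * t) := by
    field_simp
  rw [hrw, div_le_div_iff₀ hden (by linarith : (0:ℝ) < 1 - a)]
  nlinarith [mul_le_mul_of_nonneg_left (le_of_lt (lt_of_le_of_lt htle hSgt)) ha0]

theorem stmt_4 (n : ℕ) (hn : 2 ≤ n) (a : ℝ) (ha : a ∈ Set.Icc (0 : ℝ) 1) :
    (a < 1 → IsLUB (revRatios n a) ((1 + a) / (1 - a))) ∧
    (a = 1 → ¬ BddAbove (revRatios n a)) := by
  obtain ⟨ha0, ha1⟩ := ha
  constructor
  · intro halt
    constructor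
    · intro s hs
      exact ratio_le n a ha0 halt hs
    · intro b hb
      have hcont : Filter.Tendsto (fun r : ℝ => (1 + a * r) / (1 - a * r))
          (nhdsWithin 1 (Set.Iio 1)) (nhds ((1 + a) / (1 - a))) := by
        apply Filter.Tendsto.mono_left _ nhdsWithin_le_nhds
        have hc : ContinuousAt (fun r : ℝ => (1 + a * r) / (1 - a * r)) 1 := by
          apply ContinuousAt.div (by fun_prop) (by fun_prop)
          simp only [mul_one]
          linarith
        simpa using hc.tendsto
      refine le_of_tendsto hcont ?_
      filter_upwards [Ico_mem_nhdsLT_of_mem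
        (by constructor <;> norm_num : (1:ℝ) ∈ Set.Ioc (0:ℝ) 1)] with r hr
      exact hb (ratio_mem n hn a ha0 ha1 r hr.1 hr.2)
  · rintro rfl ⟨b, hb⟩
    set M : ℝ := max b 0 with hM
    have hM0 : 0 ≤ M := le_max_right b 0
    have hMb : b ≤ M := le_max_left b 0
    have hr0 : (0:ℝ) ≤ M / (M + 1) := by positivity
    have hr1 : M / (M + 1) < 1 := by
      rw [div_lt_one (by linarith)]; linarith
    have hmem := ratio_mem n hn 1 (by norm_num) (le_refl 1) (M / (M + 1)) hr0 hr1
    have hle := hb hmem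
    have hval : (1 + 1 * (M / (M + 1))) / (1 - 1 * (M / (M + 1))) = 2 * M + 1 := by
      have h1 : M + 1 ≠ 0 := by linarith
      field_simp
      ring
    rw [hval] at hle
    linarith
end
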